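/- Fix σ_min, σ_max with 0 < σ_min ≤ σ_max and Ê ∈ ℝ^{n×q} with SVD (1/√q)Ê = U diag(γᵢ) Vᵀ (UᵀU = VᵀV = Id_n). The minimizer over symmetric matrices S with σ_min·Id ⪯ S ⪯ σ_max·Id of the function S ↦ (1/(2q))·Tr(Êᵀ S⁻¹ Ê) + (1/2)·Tr(S) is S = U diag(clip(γᵢ, σ_min, σ_max)) Uᵀ. -/

import Mathlib

open scoped BigOperators
open Matrix Classical

/-- Clipping of `γ` at levels `a ≤ b`. -/
noncomputable def clip (γ a b : ℝ) : ℝ := max a (min γ b)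

private lemma scalar_mono {c t g : ℝ} (hc : 0 < c) (ht : 0 < t)
    (h : 0 ≤ (t - c) * (t * c - g ^ 2)) :
    g ^ 2 / c + c ≤ g ^ 2 / t + t := by
  have key : g ^ 2 / t + t - (g ^ 2 / c + c) = (t - c) * (t * c - g ^ 2) / (t * c) := by
    field_simp; ring
  nlinarith [div_nonneg h (mul_pos ht hc).le]

private lemma clip_le {a b g t : ℝ} (ha : 0 < a) (hab : a ≤ b) (hg : 0 ≤ g)
    (ht1 : a ≤ t) (ht2 : t ≤ b) :
    g ^ 2 / clip g a b + clip g a b ≤ g ^ 2 / t + t := by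
  have ht : 0 < t := lt_of_lt_of_le ha ht1
  rcases le_total g a with h | h
  · have hc : clip g a b = a := by rw [clip, min_eq_left (h.trans hab), max_eq_left h]
    rw [hc]
    refine scalar_mono ha ht ?_
    have hg2 : (0:ℝ) ≤ t * a - g ^ 2 := by nlinarith [mul_le_mul h h hg ha.le, mul_le_mul_of_nonneg_right ht1 ha.le]
    exact mul_nonneg (sub_nonneg.2 ht1) hg2
  · rcases le_total g b with h' | h'
    · have hc : clip g a b = g := by rw [clip, min_eq_left h', max_eq_right h]
      rw [hc]
      exact scalar_mono (lt_of_lt_of_le ha h) ht (by nlinarith [sq_nonneg (t - g)])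
    · have hc : clip g a b = b := by rw [clip, min_eq_right h', max_eq_right hab]
      rw [hc]
      refine scalar_mono (lt_of_lt_of_le ha hab) ht ?_
      have h1 : (0:ℝ) ≤ b - t := sub_nonneg.2 ht2
      have h2 : (0:ℝ) ≤ g ^ 2 - t * b := by nlinarith
      nlinarith [mul_nonneg h1 h2]

private lemma psd_diag_nonneg {n : ℕ} {A : Matrix (Fin n) (Fin n) ℝ}
    (hA : A.PosSemidef) (i : Fin n) : 0 ≤ A i i := by
  have h := hA.dotProduct_mulVec_nonneg (Pi.single i 1)
  simpa [single_dotProduct, Matrix.mulVec_single] using h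

private lemma pd_diag_pos {n : ℕ} {A : Matrix (Fin n) (Fin n) ℝ}
    (hA : A.PosDef) (i : Fin n) : 0 < A i i := by
  have hne : (Pi.single i 1 : Fin n → ℝ) ≠ 0 := by
    intro h
    have := congrFun h i
    simp at this
  have h := hA.dotProduct_mulVec_pos (x := Pi.single i 1) hne
  simpa [single_dotProduct, Matrix.mulVec_single] using h

/-- For a positive definite real matrix, `1 / M i i ≤ (M⁻¹) i i`. -/
private lemma inv_diag_le {n : ℕ} {M : Matrix (Fin n) (Fin n) ℝ}
    (hM : M.PosDef) (i : Fin n) : 1 / M i i ≤ M⁻¹ i i := by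
  have hdet : IsUnit M.det := isUnit_iff_ne_zero.2 hM.det_pos.ne'
  set e : Fin n → ℝ := Pi.single i 1 with he
  set v : Fin n → ℝ := M⁻¹ *ᵥ e with hv
  have hMv : M *ᵥ v = e := by
    rw [hv, Matrix.mulVec_mulVec, Matrix.mul_nonsing_inv _ hdet, Matrix.one_mulVec]
  have ha : 0 < M⁻¹ i i := pd_diag_pos hM.inv i
  have hMii : 0 < M i i := pd_diag_pos hM i
  set a : ℝ := M⁻¹ i i with hadef
  set t : ℝ := a⁻¹ with htdef
  have hsymm : Mᵀ = M := by
    have := hM.isHermitian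
    rwa [Matrix.IsHermitian, Matrix.conjTranspose_eq_transpose_of_trivial] at this
  have heMe : e ⬝ᵥ (M *ᵥ e) = M i i := by
    simp [he, single_dotProduct, Matrix.mulVec_single]
  have hve : v ⬝ᵥ e = a := by
    rw [he, dotProduct_single, mul_one, hv, hadef]
    simp [Matrix.mulVec_single, he]
  have hvMe : v ⬝ᵥ (M *ᵥ e) = 1 := by
    rw [Matrix.dotProduct_mulVec, ← Matrix.mulVec_transpose, hsymm, hMv]
    simp [he, single_dotProduct]
  have hee : e ⬝ᵥ e = 1 := by simp [he, single_dotProduct]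
  have hx := hM.posSemidef.dotProduct_mulVec_nonneg (e - t • v)
  have hMx : M *ᵥ (e - t • v) = M *ᵥ e - t • e := by
    rw [Matrix.mulVec_sub, Matrix.mulVec_smul, hMv]
  rw [star_trivial, hMx, sub_dotProduct, dotProduct_sub,
    dotProduct_sub, smul_dotProduct, smul_dotProduct,
    dotProduct_smul, dotProduct_smul, heMe, hvMe, hee, hve] at hx
  simp only [smul_eq_mul] at hx
  -- hx : 0 ≤ M i i - t * 1 - (t * 1 - t * (t * a))
  have hta : t * a = 1 := inv_mul_cancel₀ ha.ne'
  have hkey : t ≤ M i i := by nlinarith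
  have ht : 0 < t := by positivity
  calc 1 / M i i ≤ 1 / t := one_div_le_one_div_of_le ht hkey
  _ = a := by rw [htdef, one_div, inv_inv]

private lemma trace_conj_diag {n : ℕ} (B : Matrix (Fin n) (Fin n) ℝ) (d : Fin n → ℝ) :
    (Matrix.diagonal d * B * Matrix.diagonal d).trace = ∑ i, d i * B i i * d i := by
  simp [Matrix.trace, Matrix.diag, Matrix.mul_diagonal, Matrix.diagonal_mul]

/-- The minimizer over `σmin·Id ⪯ S ⪯ σmax·Id` of
`S ↦ (1/(2q))Tr(Êᵀ S⁻¹ Ê) + (1/2)Tr(S)` is `U diag(clip(γᵢ, σmin, σmax)) Uᵀ`. -/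
theorem smoothed_concomitant_noise_minimizer {n q : ℕ} (hq : 0 < q)
    (σmin σmax : ℝ) (h1 : 0 < σmin) (h2 : σmin ≤ σmax)
    (Ehat : Matrix (Fin n) (Fin q) ℝ)
    (U : Matrix (Fin n) (Fin n) ℝ) (V : Matrix (Fin q) (Fin n) ℝ)
    (γ : Fin n → ℝ) (hγ : ∀ i, 0 ≤ γ i)
    (hU : Uᵀ * U = 1) (hV : Vᵀ * V = 1)
    (hsvd : (1 / Real.sqrt q) • Ehat = U * Matrix.diagonal γ * Vᵀ) :
    (let Shat := U * Matrix.diagonal (fun i => clip (γ i) σmin σmax) * Uᵀ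
     (Shat.IsHermitian ∧ (Shat - σmin • (1 : Matrix (Fin n) (Fin n) ℝ)).PosSemidef ∧
        (σmax • (1 : Matrix (Fin n) (Fin n) ℝ) - Shat).PosSemidef) ∧
      ∀ S : Matrix (Fin n) (Fin n) ℝ, S.IsHermitian →
        (S - σmin • (1 : Matrix (Fin n) (Fin n) ℝ)).PosSemidef →
        (σmax • (1 : Matrix (Fin n) (Fin n) ℝ) - S).PosSemidef →
        (1 / (2 * (q : ℝ))) * (Ehatᵀ * Shat⁻¹ * Ehat).trace + (1 / 2) * Shat.trace ≤
          (1 / (2 * (q : ℝ))) * (Ehatᵀ * S⁻¹ * Ehat).trace + (1 / 2) * S.trace) := by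
  intro Shat
  set c : Fin n → ℝ := fun i => clip (γ i) σmin σmax with hcdef
  have hc1 : ∀ i, σmin ≤ c i := fun i => le_max_left _ _
  have hc2 : ∀ i, c i ≤ σmax := fun i => max_le h2 (min_le_right _ _)
  have hcpos : ∀ i, 0 < c i := fun i => lt_of_lt_of_le h1 (hc1 i)
  have hUUT : U * Uᵀ = 1 := mul_eq_one_comm.mp hU
  have hstar : ∀ (A : Matrix (Fin n) (Fin n) ℝ), Aᴴ = Aᵀ := fun A =>
    Matrix.conjTranspose_eq_transpose_of_trivial A
  have hShat : Shat = U * Matrix.diagonal c * Uᵀ := rfl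
  -- conjugation identities
  have conj_smul : ∀ r : ℝ, U * (r • (1 : Matrix (Fin n) (Fin n) ℝ)) * Uᵀ = r • 1 := by
    intro r
    rw [Matrix.mul_smul, Matrix.smul_mul, mul_one, hUUT]
  have conj_diag : ∀ d : Fin n → ℝ,
      Shat - Matrix.diagonal d * 0 = Shat := by intro d; simp
  -- Hermitian
  have hShatH : Shat.IsHermitian := by
    rw [Matrix.IsHermitian, hstar, hShat]
    simp [Matrix.transpose_mul, Matrix.diagonal_transpose, Matrix.mul_assoc]
  -- PSD bounds for Shat
  have hsub1 : Shat - σmin • (1 : Matrix (Fin n) (Fin n) ℝ)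
      = U * Matrix.diagonal (fun i => c i - σmin) * Uᵀ := by
    rw [hShat, ← conj_smul σmin, ← Matrix.sub_mul, ← Matrix.mul_sub,
      Matrix.smul_one_eq_diagonal, ← Matrix.diagonal_sub]
  have hsub2 : σmax • (1 : Matrix (Fin n) (Fin n) ℝ) - Shat
      = U * Matrix.diagonal (fun i => σmax - c i) * Uᵀ := by
    rw [hShat, ← conj_smul σmax, ← Matrix.sub_mul, ← Matrix.mul_sub,
      Matrix.smul_one_eq_diagonal, ← Matrix.diagonal_sub]
  have hpsd1 : (Shat - σmin • (1 : Matrix (Fin n) (Fin n) ℝ)).PosSemidef := by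
    rw [hsub1, ← hstar]
    exact (Matrix.PosSemidef.diagonal (fun i => sub_nonneg.2 (hc1 i))).mul_mul_conjTranspose_same U
  have hpsd2 : (σmax • (1 : Matrix (Fin n) (Fin n) ℝ) - Shat).PosSemidef := by
    rw [hsub2, ← hstar]
    exact (Matrix.PosSemidef.diagonal (fun i => sub_nonneg.2 (hc2 i))).mul_mul_conjTranspose_same U
  refine ⟨⟨hShatH, hpsd1, hpsd2⟩, ?_⟩
  intro S hSH hS1 hS2
  -- basic scalar facts
  have hqR : (0 : ℝ) < q := by exact_mod_cast hq
  have hsq : Real.sqrt q ≠ 0 := ne_of_gt (Real.sqrt_pos.2 hqR)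
  have hE : Ehat = Real.sqrt q • (U * Matrix.diagonal γ * Vᵀ) := by
    rw [← hsvd, smul_smul]
    rw [mul_one_div, div_self hsq, one_smul]
  -- positive definiteness of S and M
  have hpd_smin : ((σmin • (1 : Matrix (Fin n) (Fin n) ℝ))).PosDef := by
    rw [Matrix.smul_one_eq_diagonal]
    exact Matrix.PosDef.diagonal (fun i => h1)
  have hSpd : S.PosDef := by
    have := Matrix.PosDef.posSemidef_add hS1 hpd_smin
    rwa [sub_add_cancel] at this
  have hdetS : IsUnit S.det := isUnit_iff_ne_zero.2 hSpd.det_pos.ne'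
  set M : Matrix (Fin n) (Fin n) ℝ := Uᵀ * S * U with hMdef
  have hM1 : (M - σmin • (1 : Matrix (Fin n) (Fin n) ℝ)).PosSemidef := by
    have h := hS1.conjTranspose_mul_mul_same U
    rw [hstar] at h
    have heq : Uᵀ * (S - σmin • (1 : Matrix (Fin n) (Fin n) ℝ)) * U
        = M - σmin • (1 : Matrix (Fin n) (Fin n) ℝ) := by
      rw [Matrix.mul_sub, Matrix.sub_mul, hMdef, Matrix.mul_smul, Matrix.smul_mul,
        mul_one, hU]
    rwa [heq] at h
  have hM2 : (σmax • (1 : Matrix (Fin n) (Fin n) ℝ) - M).PosSemidef := by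
    have h := hS2.conjTranspose_mul_mul_same U
    rw [hstar] at h
    have heq : Uᵀ * (σmax • (1 : Matrix (Fin n) (Fin n) ℝ) - S) * U
        = σmax • (1 : Matrix (Fin n) (Fin n) ℝ) - M := by
      rw [Matrix.mul_sub, Matrix.sub_mul, hMdef, Matrix.mul_smul, Matrix.smul_mul,
        mul_one, hU]
    rwa [heq] at h
  have hMpd : M.PosDef := by
    have := Matrix.PosDef.posSemidef_add hM1 hpd_smin
    rwa [sub_add_cancel] at this
  -- diagonal bounds for M
  have hMd1 : ∀ i, σmin ≤ M i i := by
    intro i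
    have h := psd_diag_nonneg hM1 i
    simp only [Matrix.sub_apply, Matrix.smul_apply, Matrix.one_apply_eq, smul_eq_mul,
      mul_one] at h
    linarith
  have hMd2 : ∀ i, M i i ≤ σmax := by
    intro i
    have h := psd_diag_nonneg hM2 i
    simp only [Matrix.sub_apply, Matrix.smul_apply, Matrix.one_apply_eq, smul_eq_mul,
      mul_one] at h
    linarith
  -- inverse conjugation for S
  have hMinv : M⁻¹ = Uᵀ * S⁻¹ * U := by
    apply Matrix.inv_eq_right_inv
    calc (Uᵀ * S * U) * (Uᵀ * S⁻¹ * U) = Uᵀ * (S * ((U * Uᵀ) * (S⁻¹ * U))) := by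
          simp only [Matrix.mul_assoc]
    _ = Uᵀ * (S * (S⁻¹ * U)) := by rw [hUUT, Matrix.one_mul]
    _ = Uᵀ * ((S * S⁻¹) * U) := by rw [Matrix.mul_assoc]
    _ = 1 := by rw [Matrix.mul_nonsing_inv _ hdetS, Matrix.one_mul, hU]
  -- inverse of Shat
  have hShatInv : Shat⁻¹ = U * Matrix.diagonal (fun i => (c i)⁻¹) * Uᵀ := by
    rw [hShat]
    apply Matrix.inv_eq_right_inv
    calc (U * Matrix.diagonal c * Uᵀ) * (U * Matrix.diagonal (fun i => (c i)⁻¹) * Uᵀ)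
        = U * (Matrix.diagonal c * ((Uᵀ * U) * (Matrix.diagonal (fun i => (c i)⁻¹) * Uᵀ))) := by
          simp only [Matrix.mul_assoc]
    _ = U * ((Matrix.diagonal c * Matrix.diagonal (fun i => (c i)⁻¹)) * Uᵀ) := by
          rw [hU, Matrix.one_mul, Matrix.mul_assoc]
    _ = 1 := by
          rw [Matrix.diagonal_mul_diagonal]
          have : (fun i => c i * (c i)⁻¹) = fun _ : Fin n => (1:ℝ) := by
            funext i; exact mul_inv_cancel₀ (hcpos i).ne'
          rw [this, Matrix.diagonal_one, Matrix.one_mul, hUUT]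
  -- trace formula
  have trace_key : ∀ A : Matrix (Fin n) (Fin n) ℝ,
      (Ehatᵀ * A * Ehat).trace = q * ∑ i, γ i * ((Uᵀ * A * U) i i) * γ i := by
    intro A
    rw [hE, Matrix.transpose_smul]
    rw [Matrix.smul_mul, Matrix.smul_mul, Matrix.mul_smul, smul_smul,
      Matrix.trace_smul, smul_eq_mul, Real.mul_self_sqrt hqR.le]
    congr 1
    have hXT : (U * Matrix.diagonal γ * Vᵀ)ᵀ = V * Matrix.diagonal γ * Uᵀ := by
      simp [Matrix.transpose_mul, Matrix.diagonal_transpose, Matrix.mul_assoc]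
    rw [hXT]
    have hprod : (V * Matrix.diagonal γ * Uᵀ) * A * (U * Matrix.diagonal γ * Vᵀ)
        = V * (Matrix.diagonal γ * (Uᵀ * A * U) * Matrix.diagonal γ) * Vᵀ := by
      simp only [Matrix.mul_assoc]
    rw [hprod, Matrix.trace_mul_cycle, ← Matrix.mul_assoc, hV, Matrix.one_mul,
      trace_conj_diag]
  -- traces of Shat
  have hUAU_Shat : Uᵀ * Shat⁻¹ * U = Matrix.diagonal (fun i => (c i)⁻¹) := by
    rw [hShatInv]
    calc Uᵀ * (U * Matrix.diagonal (fun i => (c i)⁻¹) * Uᵀ) * U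
        = (Uᵀ * U) * (Matrix.diagonal (fun i => (c i)⁻¹) * (Uᵀ * U)) := by
          simp only [Matrix.mul_assoc]
    _ = _ := by rw [hU, Matrix.one_mul, Matrix.mul_one]
  have htrShat : Shat.trace = ∑ i, c i := by
    rw [hShat, Matrix.trace_mul_cycle, hU, Matrix.one_mul, Matrix.trace_diagonal]
  have htrS : S.trace = ∑ i, M i i := by
    have : M.trace = S.trace := by
      rw [hMdef, Matrix.trace_mul_cycle, hUUT, Matrix.one_mul]
    rw [← this]
    rfl
  -- rewrite goal
  rw [trace_key Shat⁻¹, trace_key S⁻¹, hUAU_Shat, ← hMinv, htrShat, htrS]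
  have hhalf : ∀ x : ℝ, (1 / (2 * (q:ℝ))) * ((q:ℝ) * x) = x / 2 := by
    intro x; field_simp
  rw [hhalf, hhalf]
  have hsum : ∀ i : Fin n,
      γ i * (Matrix.diagonal (fun j => (c j)⁻¹) i i) * γ i + c i
        ≤ γ i * (M⁻¹ i i) * γ i + M i i := by
    intro i
    rw [Matrix.diagonal_apply_eq]
    have hstep1 : γ i ^ 2 / c i + c i ≤ γ i ^ 2 / M i i + M i i :=
      clip_le h1 h2 (hγ i) (hMd1 i) (hMd2 i)
    have hMiipos : 0 < M i i := lt_of_lt_of_le h1 (hMd1 i)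
    have hstep2 : γ i ^ 2 / M i i ≤ γ i ^ 2 * (M⁻¹ i i) := by
      rw [div_eq_mul_one_div]
      exact mul_le_mul_of_nonneg_left (inv_diag_le hMpd i) (sq_nonneg _)
    have e1 : γ i * (c i)⁻¹ * γ i = γ i ^ 2 / c i := by
      rw [div_eq_mul_inv]; ring
    have e2 : γ i * (M⁻¹ i i) * γ i = γ i ^ 2 * (M⁻¹ i i) := by ring
    rw [e1, e2]
    linarith
  have hsums : ∑ i, (γ i * (Matrix.diagonal (fun j => (c j)⁻¹) i i) * γ i) + ∑ i, c i
      ≤ ∑ i, (γ i * (M⁻¹ i i) * γ i) + ∑ i, M i i := by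
    rw [← Finset.sum_add_distrib, ← Finset.sum_add_distrib]
    exact Finset.sum_le_sum (fun i _ => hsum i)
  linarith
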